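/- Fix w ∈ ℝ^d, p ≥ 1, and integers n > 2f + 2 with f ≥ 0. Suppose the good workers' updates V_1,…,V_{n−f} are independent random vectors in ℝ^d with E[V_i] = ∇F(w) and E[‖V_i − ∇F(w)‖₂²] ≤ σ², and B_1,…,B_f are arbitrary random vectors possibly dependent on the V_i. Let U be the output of the generalized Krum rule with parameter p. Then for each r ∈ {2,3,4} there is a constant C, depending only on n, f, d, p, r, such that E[‖U‖₂^r] ≤ C · E[‖G(w,z)‖₂^r]. -/

import Mathlib

open MeasureTheory ProbabilityTheory Finset

/-- The `r`-(quasi)norm on `ℝ^d`: `‖x‖_r = (Σ_k |x_k|^r)^{1/r}`. -/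
noncomputable def pnorm {d : ℕ} (r : ℝ) (x : EuclideanSpace ℝ (Fin d)) : ℝ :=
  (∑ k, |x k| ^ r) ^ (1 / r)

lemma pnorm_nonneg' {d : ℕ} (p : ℝ) (x : EuclideanSpace ℝ (Fin d)) : 0 ≤ pnorm p x :=
  Real.rpow_nonneg (Finset.sum_nonneg fun _ _ => Real.rpow_nonneg (abs_nonneg _) _) _

lemma abs_le_pnorm' {d : ℕ} {p : ℝ} (hp : 1 ≤ p) (x : EuclideanSpace ℝ (Fin d)) (k : Fin d) :
    |x k| ≤ pnorm p x := by
  have hp0 : (0:ℝ) < p := lt_of_lt_of_le one_pos hp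
  have h1 : |x k| ^ p ≤ ∑ j, |x j| ^ p :=
    Finset.single_le_sum (f := fun j => |x j| ^ p)
      (fun j _ => Real.rpow_nonneg (abs_nonneg _) _) (Finset.mem_univ k)
  have h2 := Real.rpow_le_rpow (Real.rpow_nonneg (abs_nonneg _) _) h1
    (le_of_lt (by positivity : (0:ℝ) < 1/p))
  calc |x k| = (|x k| ^ p) ^ (1/p) := by
        rw [← Real.rpow_mul (abs_nonneg _), mul_one_div_cancel hp0.ne', Real.rpow_one]
    _ ≤ (∑ j, |x j| ^ p) ^ (1/p) := h2
    _ = pnorm p x := rfl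

lemma abs_le_norm' {d : ℕ} (x : EuclideanSpace ℝ (Fin d)) (k : Fin d) : |x k| ≤ ‖x‖ := by
  rw [EuclideanSpace.norm_eq]
  have h1 : |x k| ^ 2 ≤ ∑ j, ‖x j‖ ^ 2 := by
    refine Finset.single_le_sum (f := fun j => ‖x j‖ ^ 2) (fun j _ => by positivity)
      (Finset.mem_univ k) |>.trans_eq' ?_
    simp [Real.norm_eq_abs, sq_abs]
  calc |x k| = Real.sqrt (|x k| ^ 2) := by rw [Real.sqrt_sq (abs_nonneg _)]
    _ ≤ _ := Real.sqrt_le_sqrt h1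

lemma norm_le_sqrt_mul_pnorm' {d : ℕ} {p : ℝ} (hp : 1 ≤ p) (x : EuclideanSpace ℝ (Fin d)) :
    ‖x‖ ≤ Real.sqrt d * pnorm p x := by
  rw [EuclideanSpace.norm_eq]
  have h1 : ∑ k, ‖x k‖ ^ 2 ≤ (d : ℝ) * pnorm p x ^ 2 := by
    calc ∑ k, ‖x k‖ ^ 2 ≤ ∑ _k : Fin d, pnorm p x ^ 2 := by
          refine Finset.sum_le_sum fun k _ => ?_
          rw [Real.norm_eq_abs]
          exact pow_le_pow_left₀ (abs_nonneg _) (abs_le_pnorm' hp x k) 2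
      _ = (d : ℝ) * pnorm p x ^ 2 := by simp [mul_comm]
  calc Real.sqrt (∑ k, ‖x k‖ ^ 2) ≤ Real.sqrt ((d : ℝ) * pnorm p x ^ 2) := Real.sqrt_le_sqrt h1
    _ = Real.sqrt d * pnorm p x := by
        rw [Real.sqrt_mul (Nat.cast_nonneg d), Real.sqrt_sq (pnorm_nonneg' p x)]

lemma pnorm_le_const_mul_norm' {d : ℕ} {p : ℝ} (hp : 1 ≤ p) (x : EuclideanSpace ℝ (Fin d)) :
    pnorm p x ≤ (d : ℝ) ^ (1/p) * ‖x‖ := by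
  have hp0 : (0:ℝ) < p := lt_of_lt_of_le one_pos hp
  have h1 : ∑ k, |x k| ^ p ≤ (d : ℝ) * ‖x‖ ^ p := by
    calc ∑ k, |x k| ^ p ≤ ∑ _k : Fin d, ‖x‖ ^ p :=
          Finset.sum_le_sum fun k _ =>
            Real.rpow_le_rpow (abs_nonneg _) (abs_le_norm' x k) hp0.le
      _ = (d : ℝ) * ‖x‖ ^ p := by simp [mul_comm]
  calc pnorm p x ≤ ((d : ℝ) * ‖x‖ ^ p) ^ (1/p) :=
        Real.rpow_le_rpow (Finset.sum_nonneg fun _ _ => Real.rpow_nonneg (abs_nonneg _) _)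
          h1 (le_of_lt (by positivity))
    _ = (d : ℝ) ^ (1/p) * ‖x‖ := by
        rw [Real.mul_rpow (Nat.cast_nonneg d) (Real.rpow_nonneg (norm_nonneg x) p),
          ← Real.rpow_mul (norm_nonneg x), mul_one_div_cancel hp0.ne', Real.rpow_one]

/-- Theorem 1, iid moment bound: fix `n > 2f + 2`, `d`, `p ≥ 1`, and
`r ∈ {2,3,4}`.  There is a constant `C` (depending only on `n, f, d, p, r`) such that for
any probability space, any good workers (a set `Good` of size `n - f`) sending independent
stochastic gradients with mean `∇F(w)` and variance at most `σ²`, any Byzantine updates,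
and any pointwise realization `U` of the generalized Krum rule with parameter `p`,
`E[‖U‖₂^r] ≤ C · E[‖G(w,z)‖₂^r]`, where
`E[‖G(w,z)‖₂^r] = (1/(n-f)) Σ_{i ∈ Good} E[‖V_i‖₂^r]`. -/
theorem generalized_krum_moments_iid (n f d : ℕ) (hn : 2 * f + 2 < n)
    (p : ℝ) (hp : 1 ≤ p) (r : ℕ) (hr : r ∈ ({2, 3, 4} : Set ℕ)) :
    ∃ C : ℝ,
      ∀ (Ωs : Type) [MeasurableSpace Ωs] (μ : Measure Ωs) [IsProbabilityMeasure μ]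
        (W : Fin n → Ωs → EuclideanSpace ℝ (Fin d))
        (Good : Finset (Fin n)), Good.card = n - f →
        iIndepFun (fun i : {i : Fin n // i ∈ Good} => W i.1) μ →
        ∀ (gradFw : EuclideanSpace ℝ (Fin d)) (σ : ℝ),
        (∀ i ∈ Good, MemLp (W i) 2 μ) →
        (∀ i ∈ Good, MemLp (W i) r μ) →
        (∀ i ∈ Good, ∫ ω, W i ω ∂μ = gradFw) →
        (∀ i ∈ Good, ∫ ω, ‖W i ω - gradFw‖ ^ 2 ∂μ ≤ σ ^ 2) →
        ∀ (N : Ωs → Fin n → Finset (Fin n)),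
        (∀ ω i, i ∉ N ω i) →
        (∀ ω i, (N ω i).card = n - f - 2) →
        (∀ ω i, ∀ j ∈ N ω i, ∀ l, l ∉ N ω i → l ≠ i →
          pnorm p (W i ω - W j ω) ≤ pnorm p (W i ω - W l ω)) →
        ∀ (istar : Ωs → Fin n),
        (∀ ω i, ∑ j ∈ N ω (istar ω), pnorm p (W (istar ω) ω - W j ω) ^ 2 ≤
          ∑ j ∈ N ω i, pnorm p (W i ω - W j ω) ^ 2) →
        ∀ (U : Ωs → EuclideanSpace ℝ (Fin d)),
        (∀ ω, U ω = W (istar ω) ω) →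
        Integrable (fun ω => ‖U ω‖ ^ r) μ →
        ∫ ω, ‖U ω‖ ^ r ∂μ ≤
          C * (((n : ℝ) - f)⁻¹ * ∑ i ∈ Good, ∫ ω, ‖W i ω‖ ^ r ∂μ) := by
  have hr1 : 1 ≤ r := by
    rcases hr with rfl | rfl | rfl <;> norm_num
  have hfn : f ≤ n := by omega
  -- the deterministic constant
  set K : ℝ := 1 + Real.sqrt d * (Real.sqrt n * (2 * (d:ℝ) ^ (1/p))) with hK
  have hK0 : 0 ≤ K := by
    have h1 : (0:ℝ) ≤ Real.sqrt d := Real.sqrt_nonneg _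
    have h2 : (0:ℝ) ≤ Real.sqrt n := Real.sqrt_nonneg _
    have h3 : (0:ℝ) ≤ (d:ℝ) ^ (1/p) := Real.rpow_nonneg (Nat.cast_nonneg d) _
    positivity
  have hm0 : 0 < n - f := by omega
  have hmR : ((n:ℝ) - f) = ((n - f : ℕ) : ℝ) := by
    rw [Nat.cast_sub hfn]
  refine ⟨K ^ r * ((n:ℝ) - f) ^ (r - 1) * ((n:ℝ) - f), ?_⟩
  intro Ωs _ μ _ W Good hcard hind gradFw σ hL2 hLr hmean hvar N hNnot hNcard hNmin
    istar hscore U hU hIntU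
  -- pointwise deterministic bound : ‖U ω‖ ≤ K * ∑ i ∈ Good, ‖W i ω‖
  have key : ∀ ω, ‖U ω‖ ≤ K * ∑ i ∈ Good, ‖W i ω‖ := by
    intro ω
    set S : ℝ := ∑ i ∈ Good, ‖W i ω‖ with hSdef
    have hS0 : 0 ≤ S := Finset.sum_nonneg fun i _ => norm_nonneg _
    have hle : ∀ i ∈ Good, ‖W i ω‖ ≤ S := fun i hi =>
      Finset.single_le_sum (fun j _ => norm_nonneg (W j ω)) hi
    set B : ℝ := 2 * (d:ℝ) ^ (1/p) * S with hBdef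
    have hB0 : 0 ≤ B := by
      have h3 : (0:ℝ) ≤ (d:ℝ) ^ (1/p) := Real.rpow_nonneg (Nat.cast_nonneg d) _
      positivity
    -- pnorm distance between any good pair is at most B
    have hgood : ∀ i ∈ Good, ∀ l ∈ Good, pnorm p (W i ω - W l ω) ≤ B := by
      intro i hi l hl
      have h3 : (0:ℝ) ≤ (d:ℝ) ^ (1/p) := Real.rpow_nonneg (Nat.cast_nonneg d) _
      calc pnorm p (W i ω - W l ω) ≤ (d:ℝ) ^ (1/p) * ‖W i ω - W l ω‖ :=
            pnorm_le_const_mul_norm' hp _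
        _ ≤ (d:ℝ) ^ (1/p) * (‖W i ω‖ + ‖W l ω‖) := by
            exact mul_le_mul_of_nonneg_left (norm_sub_le _ _) h3
        _ ≤ (d:ℝ) ^ (1/p) * (S + S) := by
            exact mul_le_mul_of_nonneg_left (add_le_add (hle i hi) (hle l hl)) h3
        _ = B := by rw [hBdef]; ring
    -- pick a good worker i₀
    obtain ⟨i₀, hi₀⟩ : Good.Nonempty := Finset.card_pos.1 (by omega)
    -- every neighbour of i₀ is within pnorm distance B of i₀
    have hBnd : ∀ j ∈ N ω i₀, pnorm p (W i₀ ω - W j ω) ≤ B := by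
      intro j hj
      by_cases hjG : j ∈ Good
      · exact hgood i₀ hi₀ j hjG
      · -- there is a good worker outside N ω i₀ ∪ {i₀}
        have hsub : ¬ Good ⊆ insert i₀ (N ω i₀) := by
          intro hcon
          have h1 := Finset.card_le_card hcon
          have h2 : (insert i₀ (N ω i₀)).card ≤ (N ω i₀).card + 1 :=
            Finset.card_insert_le _ _
          rw [hcard] at h1
          rw [hNcard ω i₀] at h2
          omega
        obtain ⟨l, hlG, hl⟩ := Finset.not_subset.1 hsub
        simp only [Finset.mem_insert, not_or] at hl
        calc pnorm p (W i₀ ω - W j ω) ≤ pnorm p (W i₀ ω - W l ω) :=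
              hNmin ω i₀ j hj l hl.2 hl.1
          _ ≤ B := hgood i₀ hi₀ l hlG
    -- bound on the score of i₀, hence of istar ω
    have hscore₀ : ∑ j ∈ N ω i₀, pnorm p (W i₀ ω - W j ω) ^ 2 ≤ (n : ℝ) * B ^ 2 := by
      calc ∑ j ∈ N ω i₀, pnorm p (W i₀ ω - W j ω) ^ 2 ≤ ∑ _j ∈ N ω i₀, B ^ 2 :=
            Finset.sum_le_sum fun j hj =>
              pow_le_pow_left₀ (pnorm_nonneg' _ _) (hBnd j hj) 2
        _ = ((N ω i₀).card : ℝ) * B ^ 2 := by rw [Finset.sum_const, nsmul_eq_mul]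
        _ ≤ (n : ℝ) * B ^ 2 := by
            have hc : ((N ω i₀).card : ℝ) ≤ (n : ℝ) := by
              have h := Finset.card_le_univ (N ω i₀)
              rw [Fintype.card_fin] at h
              exact_mod_cast h
            exact mul_le_mul_of_nonneg_right hc (sq_nonneg B)
    -- there is a good worker among the neighbours of istar ω
    obtain ⟨j₁, hj₁N, hj₁G⟩ : ∃ j ∈ N ω (istar ω), j ∈ Good := by
      by_contra hcon
      push_neg at hcon
      have hsub : N ω (istar ω) ⊆ Finset.univ \ Good := fun j hj =>
        Finset.mem_sdiff.2 ⟨Finset.mem_univ j, hcon j hj⟩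
      have h1 := Finset.card_le_card hsub
      rw [hNcard ω (istar ω), Finset.card_sdiff_of_subset (Finset.subset_univ Good),
        Finset.card_univ, Fintype.card_fin, hcard] at h1
      omega
    have hj₁ : pnorm p (W (istar ω) ω - W j₁ ω) ^ 2 ≤ (n : ℝ) * B ^ 2 := by
      calc pnorm p (W (istar ω) ω - W j₁ ω) ^ 2
          ≤ ∑ j ∈ N ω (istar ω), pnorm p (W (istar ω) ω - W j ω) ^ 2 :=
            Finset.single_le_sum
              (f := fun j => pnorm p (W (istar ω) ω - W j ω) ^ 2)
              (fun j _ => sq_nonneg _) hj₁N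
        _ ≤ ∑ j ∈ N ω i₀, pnorm p (W i₀ ω - W j ω) ^ 2 := hscore ω i₀
        _ ≤ (n : ℝ) * B ^ 2 := hscore₀
    have hj₁' : pnorm p (W (istar ω) ω - W j₁ ω) ≤ Real.sqrt n * B := by
      calc pnorm p (W (istar ω) ω - W j₁ ω)
          = Real.sqrt (pnorm p (W (istar ω) ω - W j₁ ω) ^ 2) := by
            rw [Real.sqrt_sq (pnorm_nonneg' _ _)]
        _ ≤ Real.sqrt ((n : ℝ) * B ^ 2) := Real.sqrt_le_sqrt hj₁
        _ = Real.sqrt n * B := by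
            rw [Real.sqrt_mul (Nat.cast_nonneg n), Real.sqrt_sq hB0]
    -- conclude
    calc ‖U ω‖ = ‖W (istar ω) ω‖ := by rw [hU ω]
      _ ≤ ‖W j₁ ω‖ + ‖W (istar ω) ω - W j₁ ω‖ := norm_le_norm_add_norm_sub' _ _
      _ ≤ S + Real.sqrt d * pnorm p (W (istar ω) ω - W j₁ ω) :=
          add_le_add (hle j₁ hj₁G) (norm_le_sqrt_mul_pnorm' hp _)
      _ ≤ S + Real.sqrt d * (Real.sqrt n * B) := by
          exact add_le_add le_rfl (mul_le_mul_of_nonneg_left hj₁' (Real.sqrt_nonneg _))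
      _ = K * S := by rw [hK, hBdef]; ring
  -- pointwise r-th power bound
  have keyr : ∀ ω, ‖U ω‖ ^ r ≤
      K ^ r * (((n - f : ℕ) : ℝ) ^ (r - 1) * ∑ i ∈ Good, ‖W i ω‖ ^ r) := by
    intro ω
    have hS0 : 0 ≤ ∑ i ∈ Good, ‖W i ω‖ := Finset.sum_nonneg fun i _ => norm_nonneg _
    have h1 : ‖U ω‖ ^ r ≤ (K * ∑ i ∈ Good, ‖W i ω‖) ^ r :=
      pow_le_pow_left₀ (norm_nonneg _) (key ω) r
    have h2 : (∑ i ∈ Good, ‖W i ω‖) ^ r ≤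
        ((n - f : ℕ) : ℝ) ^ (r - 1) * ∑ i ∈ Good, ‖W i ω‖ ^ r := by
      have := pow_sum_div_card_le_sum_pow (s := Good) (f := fun i => ‖W i ω‖)
        (fun i _ => norm_nonneg _) (r - 1)
      rw [hcard] at this
      have hr' : r - 1 + 1 = r := by omega
      rw [hr'] at this
      have hpos : (0:ℝ) < ((n - f : ℕ) : ℝ) ^ (r - 1) := by positivity
      calc (∑ i ∈ Good, ‖W i ω‖) ^ r
          = ((∑ i ∈ Good, ‖W i ω‖) ^ r / ((n - f : ℕ) : ℝ) ^ (r - 1)) *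
            ((n - f : ℕ) : ℝ) ^ (r - 1) := (div_mul_cancel₀ _ hpos.ne').symm
        _ ≤ (∑ i ∈ Good, ‖W i ω‖ ^ r) * ((n - f : ℕ) : ℝ) ^ (r - 1) :=
            mul_le_mul_of_nonneg_right this hpos.le
        _ = ((n - f : ℕ) : ℝ) ^ (r - 1) * ∑ i ∈ Good, ‖W i ω‖ ^ r := by ring
    calc ‖U ω‖ ^ r ≤ (K * ∑ i ∈ Good, ‖W i ω‖) ^ r := h1
      _ = K ^ r * (∑ i ∈ Good, ‖W i ω‖) ^ r := mul_pow K _ r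
      _ ≤ K ^ r * (((n - f : ℕ) : ℝ) ^ (r - 1) * ∑ i ∈ Good, ‖W i ω‖ ^ r) :=
          mul_le_mul_of_nonneg_left h2 (pow_nonneg hK0 r)
  -- integrability of the dominating function
  have hInt_i : ∀ i ∈ Good, Integrable (fun ω => ‖W i ω‖ ^ r) μ := by
    intro i hi
    have h := (hLr i hi).integrable_norm_rpow (by
        simp only [ne_eq, Nat.cast_eq_zero]; omega)
      (by simp)
    simp only [ENNReal.toReal_natCast, Real.rpow_natCast] at h
    exact h
  have hIntg : Integrable
      (fun ω => K ^ r * (((n - f : ℕ) : ℝ) ^ (r - 1) * ∑ i ∈ Good, ‖W i ω‖ ^ r)) μ := by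
    apply Integrable.const_mul
    apply Integrable.const_mul
    exact integrable_finset_sum Good hInt_i
  -- integrate the pointwise bound
  have hint : ∫ ω, ‖U ω‖ ^ r ∂μ ≤
      ∫ ω, K ^ r * (((n - f : ℕ) : ℝ) ^ (r - 1) * ∑ i ∈ Good, ‖W i ω‖ ^ r) ∂μ :=
    integral_mono hIntU hIntg keyr
  have hint2 : ∫ ω, K ^ r * (((n - f : ℕ) : ℝ) ^ (r - 1) * ∑ i ∈ Good, ‖W i ω‖ ^ r) ∂μ =
      K ^ r * (((n - f : ℕ) : ℝ) ^ (r - 1) * ∑ i ∈ Good, ∫ ω, ‖W i ω‖ ^ r ∂μ) := by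
    rw [integral_const_mul, integral_const_mul, integral_finset_sum Good hInt_i]
  refine hint.trans (le_of_eq ?_)
  have hne' : (n : ℝ) - (f : ℝ) ≠ 0 := by
    rw [hmR]; exact Nat.cast_ne_zero.2 (by omega)
  rw [hint2, ← hmR]
  field_simp
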